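/- arXiv:1210.3408 — 3 statements merged into one kernel-verified Lean document; each statement's English description precedes it below -/
import Mathlib

section
/- Let m ≥ 1, let p : ℝ^m → ℝ be the evaluation of a non-constant polynomial in m variables, and let E ⊆ ℝ^m be a measurable set with E ⊆ {λ : 0 < |p(λ)| ≤ 1} and ∫_E |p(λ)| dλ = 1. Then the Lebesgue measure of E is strictly greater than 1; consequently E cannot be contained in any measurable fundamental domain for ℤ^m. -/
open MeasureTheory Matrix Set ComplexConjugate
open scoped Real ENNReal

noncomputable section

/-- An integer vector viewed as a real vector. -/
def intVec {d : ℕ} (k : Fin d → ℤ) : Fin d → ℝ := fun i => (k i : ℝ)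

/-- `e2pi x = e^{2πix}`. -/
def e2pi (x : ℝ) : ℂ := Complex.exp (2 * Real.pi * Complex.I * x)

/-- Time–frequency shift: `π(n,ω)f(x) = e^{2πi⟨ω,x⟩} f(x−n)`. -/
def tfShift {d : ℕ} (n ω : Fin d → ℝ) (f : (Fin d → ℝ) → ℂ) : (Fin d → ℝ) → ℂ :=
  fun x => e2pi (ω ⬝ᵥ x) * f (x - n)

/-- A countable family of functions is a Parseval frame for `L²(μ)`. -/
def IsParsevalFrame {α : Type*} [MeasurableSpace α] (μ : Measure α) {ι : Type*}
    (F : ι → α → ℂ) : Prop :=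
  ∀ g : α → ℂ, MemLp g 2 μ →
    ∑' i : ι, ‖∫ x, g x * conj (F i x) ∂μ‖ ^ 2 = ∫ x, ‖g x‖ ^ 2 ∂μ

/-- A countable family of functions is an orthonormal basis of `L²(μ)`:
it consists of `L²` functions, is orthonormal, and satisfies the Parseval identity. -/
def IsONB {α : Type*} [MeasurableSpace α] (μ : Measure α) {ι : Type*}
    (F : ι → α → ℂ) : Prop :=
  (∀ i, MemLp (F i) 2 μ) ∧
  (∀ i, (∫ x, F i x * conj (F i x) ∂μ) = 1) ∧
  (∀ i i', i ≠ i' → (∫ x, F i x * conj (F i' x) ∂μ) = 0) ∧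
  IsParsevalFrame μ F

/-- The setTranslate `E + v` of a set. -/
def setTranslate {d : ℕ} (v : Fin d → ℝ) (E : Set (Fin d → ℝ)) : Set (Fin d → ℝ) :=
  (fun x => x + v) '' E

/-- `E` packs `ℝ^d` by the lattice `{L k : k ∈ ℤ^d}`: distinct translates of `E`
by lattice points intersect in Lebesgue-null sets. -/
def PacksBy {d : ℕ} (E : Set (Fin d → ℝ)) (L : (Fin d → ℤ) → (Fin d → ℝ)) : Prop :=
  ∀ k k' : Fin d → ℤ, k ≠ k' → volume (setTranslate (L k) E ∩ setTranslate (L k') E) = 0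

/-- `E` tiles `ℝ^d` by the lattice `{L k : k ∈ ℤ^d}`: it packs and the translates
cover `ℝ^d` up to a Lebesgue-null set. -/
def TilesBy {d : ℕ} (E : Set (Fin d → ℝ)) (L : (Fin d → ℤ) → (Fin d → ℝ)) : Prop :=
  PacksBy E L ∧ volume (Set.univ \ ⋃ k : Fin d → ℤ, setTranslate (L k) E) = 0

/-- A measurable fundamental domain for the lattice `ℤ^d` in `ℝ^d`. -/
def IsFundDomain {d : ℕ} (D : Set (Fin d → ℝ)) : Prop :=
  MeasurableSet D ∧ TilesBy D intVec


open scoped Pointwise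

/-- The zero set of a nonzero multivariate polynomial over `ℝ` is Lebesgue-null. -/
lemma volume_zeroSet : ∀ {k : ℕ} (p : MvPolynomial (Fin k) ℝ), p ≠ 0 →
    volume {x : Fin k → ℝ | MvPolynomial.eval x p = 0} = 0 := by
  intro k
  induction k with
  | zero =>
    intro p hp
    convert measure_empty
    · ext x
      obtain ⟨a, rfl⟩ := MvPolynomial.C_surjective (Fin 0) p
      have ha : a ≠ 0 := fun h => hp (by simp [h])
      simp [ha]
    · infer_instance
  | succ n ih =>
    intro p hp
    set q := MvPolynomial.finSuccEquiv ℝ n p with hq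
    have hq0 : q ≠ 0 := by
      simp only [hq, ne_eq, EmbeddingLike.map_eq_zero_iff]
      exact hp
    obtain ⟨j, hj⟩ : ∃ j, q.coeff j ≠ 0 := by
      by_contra h
      push_neg at h
      exact hq0 (Polynomial.ext fun j => by simp [h j])
    set T : Set ((Fin n → ℝ) × ℝ) :=
      {z | Polynomial.eval z.2 (q.map (MvPolynomial.eval z.1)) = 0} with hT
    have hTeq : T = (fun z : (Fin n → ℝ) × ℝ =>
        MvPolynomial.eval (Fin.cons z.2 z.1) p) ⁻¹' {0} := by
      ext z
      simp [hT, MvPolynomial.eval_eq_eval_mv_eval']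
      rfl
    have hcont : Continuous fun z : (Fin n → ℝ) × ℝ =>
        MvPolynomial.eval (Fin.cons z.2 z.1) p := by
      apply (MvPolynomial.continuous_eval p).comp
      refine continuous_pi fun i => ?_
      refine Fin.cases ?_ (fun j => ?_) i
      · simpa using continuous_snd
      · simpa [Function.comp_def] using (continuous_apply j).comp continuous_fst
    have hTmeas : MeasurableSet T := by
      rw [hTeq]; exact hcont.measurable (measurableSet_singleton 0)
    have hTnull : (volume.prod volume) T = 0 := by
      rw [Measure.measure_prod_null hTmeas]
      have hN : volume {s : Fin n → ℝ | MvPolynomial.eval s (q.coeff j) = 0} = 0 := ih _ hj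
      filter_upwards [measure_eq_zero_iff_ae_notMem.mp hN] with s hs
      have hmap : (q.map (MvPolynomial.eval s)) ≠ 0 := by
        intro h
        apply hs
        have := Polynomial.coeff_map (MvPolynomial.eval s) j (p := q)
        rw [h] at this
        simpa using this.symm
      have : (Prod.mk s ⁻¹' T) = {y : ℝ | (q.map (MvPolynomial.eval s)).IsRoot y} := rfl
      simp only [Pi.zero_apply, this]
      exact Set.Finite.measure_zero (Polynomial.finite_setOf_isRoot hmap) volume
    have hset : {x : Fin (n+1) → ℝ | MvPolynomial.eval x p = 0}
        = (MeasurableEquiv.piFinSuccAbove (fun _ : Fin (n+1) => ℝ) 0) ⁻¹' (Prod.swap ⁻¹' T) := by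
      ext x
      simp only [mem_setOf_eq, mem_preimage, MeasurableEquiv.piFinSuccAbove_apply, Prod.swap,
        hT]
      conv_lhs => rw [← Fin.cons_self_tail x]
      rw [MvPolynomial.eval_eq_eval_mv_eval']
      simp [Fin.tail, Fin.removeNth, Fin.succAbove_zero]
      rfl
    rw [hset, (volume_preserving_piFinSuccAbove (fun _ : Fin (n+1) => ℝ) 0).measure_preimage]
    · rw [Measure.volume_eq_prod,
        Measure.measurePreserving_swap.measure_preimage (hTmeas.nullMeasurableSet)]
      exact hTnull
    · exact (measurable_swap hTmeas).nullMeasurableSet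

instance latVAdd (m : ℕ) : VAdd (Fin m → ℤ) (Fin m → ℝ) := ⟨fun k x => intVec k + x⟩

lemma latVAdd_def {m : ℕ} (k : Fin m → ℤ) (x : Fin m → ℝ) : k +ᵥ x = intVec k + x := rfl

instance latAddAction (m : ℕ) : AddAction (Fin m → ℤ) (Fin m → ℝ) where
  zero_vadd x := by
    show intVec 0 + x = x
    funext i; simp [intVec]
  add_vadd g h x := by
    show intVec (g + h) + x = intVec g + (intVec h + x)
    funext i; simp [intVec]; ring

instance latMeasurableVAdd (m : ℕ) : MeasurableVAdd (Fin m → ℤ) (Fin m → ℝ) where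
  measurable_const_vadd g := by
    show Measurable fun x => intVec g + x
    exact measurable_const_add _
  measurable_vadd_const x := by
    apply measurable_of_countable

instance latVAddInvariant (m : ℕ) :
    VAddInvariantMeasure (Fin m → ℤ) (Fin m → ℝ) volume where
  measure_preimage_vadd g s _ := by
    show volume ((fun x => intVec g + x) ⁻¹' s) = volume s
    exact measure_preimage_add volume _ s

def unitBox (m : ℕ) : Set (Fin m → ℝ) := Set.pi univ fun _ => Ico (0:ℝ) 1

lemma unitBox_meas (m : ℕ) : MeasurableSet (unitBox m) :=
  MeasurableSet.univ_pi fun _ => measurableSet_Ico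

lemma unitBox_vol (m : ℕ) : volume (unitBox m) = 1 := by
  rw [unitBox, volume_pi_pi]
  simp

lemma mem_vadd_unitBox {m : ℕ} {g : Fin m → ℤ} {y : Fin m → ℝ}
    (hy : y ∈ g +ᵥ unitBox m) (i : Fin m) : ⌊y i⌋ = g i := by
  obtain ⟨b, hb, rfl⟩ := hy
  have hb1 := (hb i (mem_univ i)).1
  have hb2 := (hb i (mem_univ i)).2
  have hx : (fun x => g +ᵥ x) b i = (g i : ℝ) + b i := rfl
  rw [hx, Int.floor_eq_iff]
  constructor
  · linarith
  · push_cast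
    linarith

lemma unitBox_isFD (m : ℕ) :
    IsAddFundamentalDomain (Fin m → ℤ) (unitBox m) volume := by
  refine ⟨(unitBox_meas m).nullMeasurableSet, ae_of_all _ fun x => ?_, ?_⟩
  · refine ⟨fun i => -⌊x i⌋, fun i _ => ?_⟩
    rw [latVAdd_def]
    simp only [Pi.add_apply, intVec]
    push_cast
    constructor
    · linarith [Int.floor_le (x i)]
    · linarith [Int.lt_floor_add_one (x i)]
  · intro g g' hne
    apply Disjoint.aedisjoint
    rw [Set.disjoint_left]
    intro y hy hy'
    exact hne (funext fun i => (mem_vadd_unitBox hy i).symm.trans (mem_vadd_unitBox hy' i))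

lemma vadd_eq_setTranslate {m : ℕ} (g : Fin m → ℤ) (D : Set (Fin m → ℝ)) :
    g +ᵥ D = setTranslate (intVec g) D := by
  ext x
  simp only [setTranslate, Set.mem_vadd_set, Set.mem_image, latVAdd_def]
  constructor
  · rintro ⟨b, hb, rfl⟩; exact ⟨b, hb, (add_comm _ _)⟩
  · rintro ⟨b, hb, rfl⟩; exact ⟨b, hb, (add_comm _ _)⟩

lemma vol_le_one_of_packs {m : ℕ} {D : Set (Fin m → ℝ)} (hD : MeasurableSet D)
    (hpack : PacksBy D intVec) : volume D ≤ 1 := by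
  have h := (unitBox_isFD m).measure_le_of_pairwise_disjoint hD.nullMeasurableSet ?_
  · rwa [unitBox_vol] at h
  · intro g g' hne
    have key := hpack g g' hne
    refine measure_mono_null ?_ key
    intro x hx
    rw [← vadd_eq_setTranslate, ← vadd_eq_setTranslate]
    exact ⟨hx.1.1, hx.2.1⟩

/-- Let `p` be a non-constant polynomial in `m` real variables and let `E ⊆ ℝ^m` be
measurable with `E ⊆ {λ : 0 < |p(λ)| ≤ 1}` and `∫_E |p(λ)| dλ = 1`. Then the Lebesgue
measure of `E` is strictly greater than `1`; consequently `E` is not contained in any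
measurable fundamental domain for `ℤ^m`. -/
theorem volume_gt_one_of_integral_eq_one
    (m : ℕ) (hm : 1 ≤ m) (p : MvPolynomial (Fin m) ℝ) (hp : 0 < p.totalDegree)
    (E : Set (Fin m → ℝ)) (hEmeas : MeasurableSet E)
    (hEsub : E ⊆ {l : Fin m → ℝ |
      0 < |MvPolynomial.eval l p| ∧ |MvPolynomial.eval l p| ≤ 1})
    (hint : ∫ l in E, |MvPolynomial.eval l p| = 1) :
    1 < volume E ∧ ∀ D : Set (Fin m → ℝ), IsFundDomain D → ¬ E ⊆ D := by
  have hf : Measurable fun l : Fin m → ℝ => |MvPolynomial.eval l p| :=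
    (continuous_abs.comp (MvPolynomial.continuous_eval p)).measurable
  have hInt : IntegrableOn (fun l => |MvPolynomial.eval l p|) E volume := by
    by_contra h
    rw [MeasureTheory.integral_undef h] at hint
    exact one_ne_zero hint.symm
  have key : 1 < volume E := by
    by_contra hle
    push_neg at hle
    have hfin : volume E ≠ ⊤ := fun h => by simp [h] at hle
    have hconst : IntegrableOn (fun _ : Fin m → ℝ => (1:ℝ)) E volume :=
      integrableOn_const hfin
    have h1 : ∫ _ in E, (1:ℝ) = (volume E).toReal := by simp [Measure.real]
    have hmono : (1:ℝ) ≤ (volume E).toReal := by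
      rw [← hint, ← h1]
      exact setIntegral_mono_on hInt hconst hEmeas fun x hx => (hEsub hx).2
    have hle' : (volume E).toReal ≤ 1 := by
      have := ENNReal.toReal_mono (by norm_num) hle
      simpa using this
    have heq : (volume E).toReal = 1 := le_antisymm hle' hmono
    have hsub0 : ∫ l in E, ((1:ℝ) - |MvPolynomial.eval l p|) = 0 := by
      rw [integral_sub hconst hInt, h1, heq, hint]; ring
    have hnn : 0 ≤ᵐ[volume.restrict E] fun l => (1:ℝ) - |MvPolynomial.eval l p| := by
      refine (ae_restrict_iff' hEmeas).2 (ae_of_all _ fun x hx => ?_)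
      simpa using sub_nonneg.2 (hEsub hx).2
    have hIsub : IntegrableOn (fun l => (1:ℝ) - |MvPolynomial.eval l p|) E volume :=
      hconst.sub hInt
    have hzero := (integral_eq_zero_iff_of_nonneg_ae hnn hIsub).mp hsub0
    have hae : ∀ᵐ x ∂(volume : Measure (Fin m → ℝ)),
        x ∈ E → |MvPolynomial.eval x p| = 1 := by
      have h2 := (ae_restrict_iff' hEmeas).1 hzero
      filter_upwards [h2] with x hx hxE
      have h3 := hx hxE
      simp only [Pi.zero_apply] at h3
      linarith
    have h0 : volume {x : Fin m → ℝ | ¬ (x ∈ E → |MvPolynomial.eval x p| = 1)} = 0 :=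
      ae_iff.mp hae
    set Z : Set (Fin m → ℝ) := {l | |MvPolynomial.eval l p| = 1} with hZdef
    have hEZ : volume (E \ Z) = 0 := by
      refine measure_mono_null ?_ h0
      intro x hx
      simp only [mem_setOf_eq, Classical.not_imp]
      exact ⟨hx.1, hx.2⟩
    have hZ : volume Z = 0 := by
      have h1' : Z ⊆ {x : Fin m → ℝ | MvPolynomial.eval x (p - MvPolynomial.C 1) = 0} ∪
          {x : Fin m → ℝ | MvPolynomial.eval x (p + MvPolynomial.C 1) = 0} := by
        intro x hx
        rcases (abs_eq (by norm_num : (0:ℝ) ≤ 1)).mp hx with h | h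
        · left; simp [h]
        · right; simp [h]
      refine measure_mono_null h1'
        (measure_union_null (volume_zeroSet _ ?_) (volume_zeroSet _ ?_))
      · intro h
        have hpc : p = MvPolynomial.C 1 := sub_eq_zero.mp h
        rw [hpc, MvPolynomial.totalDegree_C] at hp
        exact lt_irrefl 0 hp
      · intro h
        have hpc : p = MvPolynomial.C (-1) := by
          have h2 := eq_neg_of_add_eq_zero_left h
          rw [h2, ← map_neg]
        rw [hpc, MvPolynomial.totalDegree_C] at hp
        exact lt_irrefl 0 hp
    have hE0 : volume E = 0 := by
      have hsplit : volume E ≤ volume (E \ Z) + volume Z := by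
        refine le_trans (measure_mono ?_) (measure_union_le _ _)
        intro x hx
        by_cases h : x ∈ Z
        · exact Or.inr h
        · exact Or.inl ⟨hx, h⟩
      simpa [hEZ, hZ] using hsplit
    rw [hE0] at heq
    simp at heq
  refine ⟨key, fun D hD hsub => ?_⟩
  have hle : volume E ≤ 1 := (measure_mono hsub).trans (vol_le_one_of_packs hD.1 hD.2.1)
  exact absurd key (not_lt.mpr hle)
end
end

section
/- Let G be a second countable locally compact topological group with left Haar measure μ, let H be a complex separable Hilbert space, and let π be a strongly continuous unitary representation of G on H. Let φ ∈ H be an admissible vector, i.e. for every ψ ∈ H the function W_φψ : x ↦ ⟨ψ, π(x)φ⟩ lies in L²(G, μ) and ∫_G |⟨ψ, π(x)φ⟩|² dμ(x) = ‖ψ‖². Let Γ ⊆ G be a countable subset such that the family (π(γ)φ)_{γ∈Γ} is a Parseval frame for H. Then for every ψ ∈ H and every x ∈ G, the series ∑_{γ∈Γ} W_φψ(γ) · W_φφ(γ^{-1}x) converges absolutely and equals W_φψ(x); moreover the reconstruction series converges to W_φψ in the norm of L²(G, μ). In particular W_φ(H) is a Γ-sampling space with sinc-type function S = W_φφ. 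-/
open MeasureTheory Filter
open scoped ENNReal Topology

noncomputable section


private lemma frame_summable {H : Type*} [NormedAddCommGroup H] [InnerProductSpace ℂ H]
    {ι : Type*} (f : ι → H)
    (hframe : ∀ ψ : H, ∑' i, ‖(inner ℂ ψ (f i) : ℂ)‖ ^ 2 = ‖ψ‖ ^ 2) (ψ : H) :
    Summable fun i => ‖(inner ℂ ψ (f i) : ℂ)‖ ^ 2 := by
  by_cases hψ : ψ = 0
  · simpa [hψ] using summable_zero
  · by_contra h
    have h0 := tsum_eq_zero_of_not_summable h
    rw [hframe ψ] at h0
    exact hψ (norm_eq_zero.mp (sq_eq_zero_iff.mp h0))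

private lemma frame_hasSum {H : Type*} [NormedAddCommGroup H] [InnerProductSpace ℂ H]
    [CompleteSpace H] {ι : Type*} (f : ι → H)
    (hframe : ∀ ψ : H, ∑' i, ‖(inner ℂ ψ (f i) : ℂ)‖ ^ 2 = ‖ψ‖ ^ 2) (ψ : H) :
    HasSum (fun i => (inner ℂ (f i) ψ : ℂ) • f i) ψ := by
  classical
  have hsum : ∀ v : H, Summable fun i => ‖(inner ℂ (f i) v : ℂ)‖ ^ 2 := fun v =>
    (frame_summable f hframe v).congr fun i => by rw [norm_inner_symm]
  have hV_mem : ∀ v : H, Memℓp (fun i => (inner ℂ (f i) v : ℂ)) 2 := fun v =>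
    memℓp_gen <| (hsum v).congr fun i => by
      rw [show ((2:ℝ≥0∞)).toReal = ((2:ℕ):ℝ) by simp, Real.rpow_natCast]
  let V : H →ₗᵢ[ℂ] lp (fun _ : ι => ℂ) 2 :=
    { toFun := fun v => ⟨fun i => (inner ℂ (f i) v : ℂ), hV_mem v⟩
      map_add' := fun v₁ v₂ => Subtype.ext <| funext fun i => by
        simp [inner_add_right]
        rfl
      map_smul' := fun a v => Subtype.ext <| funext fun i => by
        simp [inner_smul_right]
      norm_map' := fun v => by
        rw [lp.norm_eq_tsum_rpow (by norm_num) _]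
        have h1 : (∑' i, ‖(inner ℂ (f i) v : ℂ)‖ ^ ((2:ℝ≥0∞)).toReal) = ‖v‖ ^ (2:ℕ) := by
          rw [← hframe v]
          exact tsum_congr fun i => by
            rw [show ((2:ℝ≥0∞)).toReal = ((2:ℕ):ℝ) by simp, Real.rpow_natCast,
              norm_inner_symm]
        show (∑' i, ‖(inner ℂ (f i) v : ℂ)‖ ^ ((2:ℝ≥0∞)).toReal) ^ (1 / ((2:ℝ≥0∞)).toReal) = ‖v‖
        rw [h1, show (1 / ((2:ℝ≥0∞)).toReal) = ((2:ℝ))⁻¹ by norm_num,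
          ← Real.rpow_natCast ‖v‖ 2, ← Real.rpow_mul (norm_nonneg v)]
        norm_num }
  have hVapp : ∀ (v : H) (i : ι), (V v) i = (inner ℂ (f i) v : ℂ) := fun v i => rfl
  let A := ContinuousLinearMap.adjoint V.toContinuousLinearMap
  have hAV : ∀ v : H, A (V v) = v := fun v =>
    ext_inner_left ℂ fun u => by
      rw [ContinuousLinearMap.adjoint_inner_right]
      exact V.inner_map_map u v
  have hAs : ∀ (i : ι) (a : ℂ), A (lp.single 2 i a) = a • f i := fun i a =>
    ext_inner_left ℂ fun u => by
      rw [ContinuousLinearMap.adjoint_inner_right, inner_smul_right]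
      have h := lp.inner_single_right (𝕜 := ℂ) i a (V u)
      rw [hVapp] at h
      calc inner ℂ (V.toContinuousLinearMap u) (lp.single 2 i a)
          = (inner (𝕜 := ℂ) (V u) (lp.single 2 i a) : ℂ) := rfl
        _ = (inner (𝕜 := ℂ) (inner ℂ (f i) u : ℂ) a : ℂ) := h
        _ = a * inner ℂ u (f i) := by
            simp [RCLike.inner_apply, inner_conj_symm, mul_comm]
  have h1 : HasSum (fun i => lp.single 2 i ((V ψ) i)) (V ψ) :=
    lp.hasSum_single (by norm_num) _
  have h2 := h1.mapL A
  rw [hAV ψ] at h2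
  have h3 : (fun i => A (lp.single 2 i ((V ψ) i))) = fun i => (inner ℂ (f i) ψ : ℂ) • f i :=
    funext fun i => by rw [hVapp, hAs]
  rwa [h3] at h2


/-- Reconstruction half of the sampling theorem. Under the same hypotheses as the
isometry half (admissible vector `φ`, countable `Γ ⊆ G` with `(π(γ)φ)_{γ∈Γ}` a Parseval
frame for `H`), for every `ψ ∈ H` the series `∑_{γ∈Γ} W_φψ(γ) · W_φφ(γ⁻¹x)` converges
absolutely to `W_φψ(x)` at every `x ∈ G`, and the reconstruction series converges to
`W_φψ` in the norm of `L²(G,μ)`; thus `W_φ(H)` is a `Γ`-sampling space with sinc-type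
function `W_φφ`. -/
theorem sampling_reconstruction_of_parseval_frame
    {G : Type*} [Group G] [TopologicalSpace G] [IsTopologicalGroup G]
    [LocallyCompactSpace G] [SecondCountableTopology G]
    [MeasurableSpace G] [BorelSpace G]
    (μ : Measure G) [μ.IsHaarMeasure]
    {H : Type*} [NormedAddCommGroup H] [InnerProductSpace ℂ H] [CompleteSpace H]
    [SecondCountableTopology H]
    (π : G →* (H ≃ₗᵢ[ℂ] H))
    (hcont : ∀ v : H, Continuous fun x => π x v)
    (φ : H)
    (hadm : ∀ ψ : H, MemLp (fun x => (inner ℂ ψ (π x φ) : ℂ)) 2 μ ∧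
      ∫ x, ‖(inner ℂ ψ (π x φ) : ℂ)‖ ^ 2 ∂μ = ‖ψ‖ ^ 2)
    (Γ : Set G) (hΓ : Γ.Countable)
    (hframe : ∀ ψ : H, ∑' γ : Γ, ‖(inner ℂ ψ (π (γ : G) φ) : ℂ)‖ ^ 2 = ‖ψ‖ ^ 2) :
    ∀ ψ : H,
      (∀ x : G,
        Summable (fun γ : Γ =>
          ‖(inner ℂ ψ (π (γ : G) φ) : ℂ) * (inner ℂ φ (π ((γ : G)⁻¹ * x) φ) : ℂ)‖) ∧
        ∑' γ : Γ, (inner ℂ ψ (π (γ : G) φ) : ℂ) * (inner ℂ φ (π ((γ : G)⁻¹ * x) φ) : ℂ)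
          = (inner ℂ ψ (π x φ) : ℂ)) ∧
      Tendsto (fun F : Finset Γ =>
          eLpNorm (fun x : G => (inner ℂ ψ (π x φ) : ℂ) -
            ∑ γ ∈ F, (inner ℂ ψ (π (γ : G) φ) : ℂ) * (inner ℂ φ (π ((γ : G)⁻¹ * x) φ) : ℂ))
            2 μ)
        atTop (𝓝 0) := by
  classical
  haveI : Countable Γ := hΓ.to_subtype
  have hgrp : ∀ (γ x : G), (inner ℂ φ (π (γ⁻¹ * x) φ) : ℂ) = inner ℂ (π γ φ) (π x φ) := by
    intro γ x
    have h1 : π γ (π (γ⁻¹ * x) φ) = π x φ := by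
      have h2 : π γ * π (γ⁻¹ * x) = π x := by rw [← map_mul, mul_inv_cancel_left]
      calc π γ (π (γ⁻¹ * x) φ) = (π γ * π (γ⁻¹ * x)) φ := rfl
        _ = π x φ := by rw [h2]
    rw [← (π γ).inner_map_map φ (π (γ⁻¹ * x) φ), h1]
  intro ψ
  refine ⟨fun x => ?_, ?_⟩
  · have hd : ∀ γ : Γ, (inner ℂ φ (π ((γ:G)⁻¹ * x) φ) : ℂ) = inner ℂ (π (γ:G) φ) (π x φ) :=
      fun γ => hgrp γ x
    constructor
    · have hc2 : Summable fun γ : Γ => ‖(inner ℂ ψ (π (γ:G) φ) : ℂ)‖ ^ 2 :=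
        frame_summable (fun γ : Γ => π (γ:G) φ) hframe ψ
      have hw2 : Summable fun γ : Γ => ‖(inner ℂ (π x φ) (π (γ:G) φ) : ℂ)‖ ^ 2 :=
        frame_summable (fun γ : Γ => π (γ:G) φ) hframe (π x φ)
      refine Summable.of_nonneg_of_le (fun γ => norm_nonneg _) (fun γ => ?_)
        ((hc2.add hw2).div_const 2)
      rw [norm_mul, hd γ, norm_inner_symm (π (γ:G) φ) (π x φ)]
      nlinarith [sq_nonneg (‖(inner ℂ ψ (π (γ:G) φ) : ℂ)‖ - ‖(inner ℂ (π x φ) (π (γ:G) φ) : ℂ)‖),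
        norm_nonneg (inner ℂ ψ (π (γ:G) φ) : ℂ), norm_nonneg (inner ℂ (π x φ) (π (γ:G) φ) : ℂ)]
    · have h := (frame_hasSum (fun γ : Γ => π (γ:G) φ) hframe ψ).mapL (innerSL ℂ (π x φ))
      have h' := h.star
      have hfun : (fun γ : Γ => star ((innerSL ℂ (π x φ)) ((inner ℂ (π (γ:G) φ) ψ : ℂ) • π (γ:G) φ)))
          = fun γ : Γ => (inner ℂ ψ (π (γ:G) φ) : ℂ) * (inner ℂ (π (γ:G) φ) (π x φ) : ℂ) := by
        funext γ
        simp [inner_smul_right, star_mul', RCLike.star_def, inner_conj_symm, mul_comm]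
      rw [hfun] at h'
      have hstar : star ((innerSL ℂ (π x φ)) ψ) = (inner ℂ ψ (π x φ) : ℂ) := by
        simp [RCLike.star_def, inner_conj_symm]
      rw [hstar] at h'
      calc ∑' γ : Γ, (inner ℂ ψ (π (γ:G) φ) : ℂ) * (inner ℂ φ (π ((γ:G)⁻¹ * x) φ) : ℂ)
          = ∑' γ : Γ, (inner ℂ ψ (π (γ:G) φ) : ℂ) * (inner ℂ (π (γ:G) φ) (π x φ) : ℂ) :=
            tsum_congr fun γ => by rw [hd γ]
        _ = inner ℂ ψ (π x φ) := h'.tsum_eq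
  · have key : ∀ v : H, eLpNorm (fun x => (inner ℂ v (π x φ) : ℂ)) 2 μ = ENNReal.ofReal ‖v‖ := by
      intro v
      obtain ⟨hmem, hint⟩ := hadm v
      rw [hmem.eLpNorm_eq_integral_rpow_norm two_ne_zero ENNReal.ofNat_ne_top]
      congr 1
      have h2 : ((2:ℝ≥0∞)).toReal = ((2:ℕ):ℝ) := by simp
      rw [h2]
      have h3 : (∫ a, ‖(inner ℂ v (π a φ) : ℂ)‖ ^ ((2:ℕ):ℝ) ∂μ) = ‖v‖ ^ (2:ℕ) := by
        rw [← hint]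
        exact integral_congr_ae (Filter.Eventually.of_forall fun a => by
          simp [Real.rpow_natCast])
      rw [h3, ← Real.rpow_natCast ‖v‖ 2, ← Real.rpow_mul (norm_nonneg v)]
      norm_num
    have herr : ∀ F : Finset Γ,
        (fun x : G => (inner ℂ ψ (π x φ) : ℂ)
            - ∑ γ ∈ F, (inner ℂ ψ (π (γ:G) φ) : ℂ) * (inner ℂ φ (π ((γ:G)⁻¹ * x) φ) : ℂ))
        = fun x : G => (inner ℂ (ψ - ∑ γ ∈ F, (inner ℂ (π (γ:G) φ) ψ : ℂ) • π (γ:G) φ) (π x φ) : ℂ) := by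
      intro F; funext x
      rw [inner_sub_left, sum_inner]
      congr 1
      refine Finset.sum_congr rfl fun γ _ => ?_
      rw [inner_smul_left, inner_conj_symm, hgrp (γ:G) x]
    have hrec := frame_hasSum (fun γ : Γ => π (γ:G) φ) hframe ψ
    have htend : Tendsto (fun F : Finset Γ =>
        ‖ψ - ∑ γ ∈ F, (inner ℂ (π (γ:G) φ) ψ : ℂ) • π (γ:G) φ‖) atTop (𝓝 0) := by
      have h0 : Tendsto (fun F : Finset Γ =>
          ψ - ∑ γ ∈ F, (inner ℂ (π (γ:G) φ) ψ : ℂ) • π (γ:G) φ) atTop (𝓝 0) := by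
        simpa using (tendsto_const_nhds (x := ψ) (f := atTop (α := Finset Γ))).sub hrec
      simpa using h0.norm
    have hof : Tendsto (fun F : Finset Γ =>
        ENNReal.ofReal ‖ψ - ∑ γ ∈ F, (inner ℂ (π (γ:G) φ) ψ : ℂ) • π (γ:G) φ‖) atTop (𝓝 0) := by
      have h1 := (ENNReal.continuous_ofReal.tendsto 0).comp htend
      rw [ENNReal.ofReal_zero] at h1
      exact h1
    refine hof.congr fun F => ?_
    rw [herr F, key]
end
end

section
/- Let d ≥ 1. For i = 1, 2, let B_i ∈ GL_d(ℝ) and let E_i ⊆ ℝ^d be measurable sets such that E_i tiles ℝ^d by ℤ^d and packs ℝ^d by B_i^{−tr}ℤ^d, and set u_i = |det B_i|^{1/2} χ_{E_i} ∈ L²(ℝ^d), so that the families (π_{B_i}(j,l)u_i)_{j,l∈ℤ^d} are Parseval frames for L²(ℝ^d). Assume that for every m ∈ ℤ^d, the union B_1^{tr}(E_1 + m) ∪ B_2^{tr}(E_2 + m) is contained in some measurable fundamental domain for ℤ^d, and the intersection B_1^{tr}(E_1 + m) ∩ B_2^{tr}(E_2 + m) is a Lebesgue-null set. Then for all f, g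 ∈ L²(ℝ^d), the Gabor coefficient sequences are orthogonal in ℓ²(ℤ^d × ℤ^d): ∑_{(m,l) ∈ ℤ^d × ℤ^d} ⟨f, π_{B_1}(m,l)u_1⟩ · conj(⟨g, π_{B_2}(m,l)u_2⟩) = 0. -/
open MeasureTheory Matrix Set ComplexConjugate
open scoped Real ENNReal

noncomputable section

/-- The Gabor operator `π_B(j,l)h(t) = e^{−2πi⟨B l, t⟩} h(t − j)` for `j, l ∈ ℤ^d`. -/
def gaborOp {d : ℕ} (B : Matrix (Fin d) (Fin d) ℝ) (j l : Fin d → ℤ)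
    (h : (Fin d → ℝ) → ℂ) : (Fin d → ℝ) → ℂ :=
  fun t => e2pi (-(B.mulVec (intVec l) ⬝ᵥ t)) * h (t - intVec j)

/-- The measure `|det B(λ)| dλ dt` on `C × ℝ^d` (with `dλ` Lebesgue measure restricted
to `C` and `dt` Lebesgue measure on `ℝ^d`), so that `L²` of this measure is the space
`𝓗 = L²(C × ℝ^d, |det B(λ)| dλ dt)`. -/
def bandMeasure {m d : ℕ} (C : Set (Fin m → ℝ))
    (B : (Fin m → ℝ) → Matrix (Fin d) (Fin d) ℝ) :
    Measure ((Fin m → ℝ) × (Fin d → ℝ)) :=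
  (((volume : Measure (Fin m → ℝ)).restrict C).prod
    (volume : Measure (Fin d → ℝ))).withDensity
      fun p => ENNReal.ofReal |(B p.1).det|


namespace GaborAux

open Submodule

variable {d : ℕ}

-- ############ helpers

lemma mem_setTranslate {v x : Fin d → ℝ} {E : Set (Fin d → ℝ)} :
    x ∈ setTranslate v E ↔ x - v ∈ E := by
  constructor
  · rintro ⟨e, he, rfl⟩; simpa using he
  · intro h; exact ⟨x - v, h, by ring⟩

lemma setTranslate_eq_preimage (v : Fin d → ℝ) (E : Set (Fin d → ℝ)) :
    setTranslate v E = (fun x => x - v) ⁻¹' E := by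
  ext x; simp [mem_setTranslate, Set.mem_preimage]

lemma measurableSet_setTranslate {E : Set (Fin d → ℝ)} (hE : MeasurableSet E)
    (v : Fin d → ℝ) : MeasurableSet (setTranslate v E) := by
  rw [setTranslate_eq_preimage]
  exact hE.preimage (measurable_id.sub measurable_const)

lemma volume_setTranslate (v : Fin d → ℝ) (E : Set (Fin d → ℝ)) :
    volume (setTranslate v E) = volume E := by
  rw [setTranslate_eq_preimage]
  simp_rw [sub_eq_add_neg]
  exact measure_preimage_add_right volume (-v) E

lemma setTranslate_inter (v : Fin d → ℝ) (A B : Set (Fin d → ℝ)) :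
    setTranslate v (A ∩ B) = setTranslate v A ∩ setTranslate v B := by
  simp only [setTranslate_eq_preimage]; rfl

lemma setTranslate_setTranslate (v w : Fin d → ℝ) (A : Set (Fin d → ℝ)) :
    setTranslate v (setTranslate w A) = setTranslate (v + w) A := by
  simp only [setTranslate_eq_preimage]; ext x
  simp [sub_sub]

@[simp] lemma intVec_zero : intVec (d := d) 0 = 0 := by
  funext i; simp [intVec]

@[simp] lemma setTranslate_zero (A : Set (Fin d → ℝ)) : setTranslate 0 A = A := by
  rw [setTranslate_eq_preimage]; ext x; simp

lemma intVec_add (k k' : Fin d → ℤ) : intVec (k + k') = intVec k + intVec k' := by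
  funext i; simp [intVec]

lemma intVec_neg (k : Fin d → ℤ) : intVec (-k) = -intVec k := by
  funext i; simp [intVec]

/-- decomposition of measure along a tiling -/
lemma measure_eq_tsum_tile {T : Set (Fin d → ℝ)} (hTm : MeasurableSet T)
    (hT : TilesBy T intVec) {S : Set (Fin d → ℝ)} (hSm : MeasurableSet S) :
    volume S = ∑' k : Fin d → ℤ, volume (S ∩ setTranslate (intVec k) T) := by
  classical
  set U := ⋃ k : Fin d → ℤ, setTranslate (intVec k) T with hU
  have hUm : MeasurableSet U := MeasurableSet.iUnion fun k => measurableSet_setTranslate hTm _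
  have h1 : volume (S \ U) = 0 :=
    measure_mono_null (Set.diff_subset_diff_left (Set.subset_univ S)) hT.2
  have h2 : volume S = volume (S ∩ U) := by
    have := measure_inter_add_diff (μ := volume) S hUm
    rw [← this, h1, add_zero]
  rw [h2, Set.inter_iUnion]
  rw [measure_iUnion₀]
  · intro k k' hkk'
    refine measure_mono_null ?_ (hT.1 k k' hkk')
    intro x hx
    exact ⟨hx.1.2, hx.2.2⟩
  · exact fun k => (hSm.inter (measurableSet_setTranslate hTm _)).nullMeasurableSet

/-- two tilings give the same measure to periodic measurable sets intersected with them. -/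
lemma measure_inter_tile_eq {P T₁ T₂ : Set (Fin d → ℝ)} (hPm : MeasurableSet P)
    (hper : ∀ k : Fin d → ℤ, setTranslate (intVec k) P = P)
    (hT₁m : MeasurableSet T₁) (hT₁ : TilesBy T₁ intVec)
    (hT₂m : MeasurableSet T₂) (hT₂ : TilesBy T₂ intVec) :
    volume (P ∩ T₁) = volume (P ∩ T₂) := by
  have key : ∀ k : Fin d → ℤ,
      volume (P ∩ T₁ ∩ setTranslate (intVec k) T₂)
        = volume ((P ∩ T₂) ∩ setTranslate (intVec (-k)) T₁) := by
    intro k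
    have : P ∩ T₁ ∩ setTranslate (intVec k) T₂
        = setTranslate (intVec k) ((P ∩ T₂) ∩ setTranslate (intVec (-k)) T₁) := by
      rw [setTranslate_inter, setTranslate_inter, setTranslate_setTranslate,
        ← intVec_add, hper]
      simp only [add_neg_cancel, intVec_zero, setTranslate_zero]
      ext y; simp only [Set.mem_inter_iff]; tauto
    rw [this, volume_setTranslate]
  rw [measure_eq_tsum_tile hT₂m hT₂ (hPm.inter hT₁m)]
  rw [measure_eq_tsum_tile hT₁m hT₁ (hPm.inter hT₂m)]
  simp_rw [key]
  have := (Equiv.neg (Fin d → ℤ)).tsum_eq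
    fun k => volume ((P ∩ T₂) ∩ setTranslate (intVec k) T₁)
  simpa using this

/-- the unit cube `(0,1]^d`. -/
def unitCube (d : ℕ) : Set (Fin d → ℝ) := Set.univ.pi fun _ => Set.Ioc (0:ℝ) 1

lemma measurableSet_unitCube : MeasurableSet (unitCube d) :=
  MeasurableSet.univ_pi fun _ => measurableSet_Ioc

lemma mem_setTranslate_unitCube {k : Fin d → ℤ} {x : Fin d → ℝ} :
    x ∈ setTranslate (intVec k) (unitCube d) ↔ ∀ i, x i - k i ∈ Set.Ioc (0:ℝ) 1 := by
  rw [mem_setTranslate]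
  constructor
  · intro h i; exact h i (Set.mem_univ i)
  · intro h i _; exact h i

lemma unitCube_tiles : TilesBy (unitCube d) intVec := by
  constructor
  · intro k k' hkk'
    convert measure_empty (μ := volume)
    ext x
    simp only [Set.mem_inter_iff, mem_setTranslate_unitCube, Set.mem_empty_iff_false,
      iff_false, not_and]
    intro h1 h2
    apply hkk'
    funext i
    have a1 := h1 i; have a2 := h2 i
    have e1 : (k i : ℝ) < x i ∧ x i ≤ k i + 1 := by
      constructor
      · linarith [a1.1]
      · linarith [a1.2]
    have e2 : (k' i : ℝ) < x i ∧ x i ≤ k' i + 1 := by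
      constructor
      · linarith [a2.1]
      · linarith [a2.2]
    by_contra hne
    have hki : k i ≠ k' i := fun h => hne h
    rcases lt_or_gt_of_ne hki with h | h
    · have : (k i : ℝ) + 1 ≤ k' i := by exact_mod_cast Int.add_one_le_iff.mpr h
      linarith [e1.2, e2.1]
    · have : (k' i : ℝ) + 1 ≤ k i := by exact_mod_cast Int.add_one_le_iff.mpr h
      linarith [e2.2, e1.1]
  · convert measure_empty (μ := volume)
    ext x
    simp only [Set.mem_diff, Set.mem_univ, true_and, Set.mem_iUnion,
      Set.mem_empty_iff_false, iff_false, not_not]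
    refine ⟨fun i => ⌈x i⌉ - 1, ?_⟩
    rw [mem_setTranslate_unitCube]
    intro i
    simp only [intVec, Int.cast_sub, Int.cast_one]
    constructor
    · have := Int.ceil_lt_add_one (x i); linarith
    · have := Int.le_ceil (x i); linarith



instance factZeroLtOne : Fact ((0:ℝ) < 1) := ⟨zero_lt_one⟩

/-- The `d`-dimensional torus. -/
abbrev Td (d : ℕ) := Fin d → AddCircle (1:ℝ)

/-- Componentwise projection onto the torus. -/
def qmap (d : ℕ) : (Fin d → ℝ) → Td d := fun x i => (x i : AddCircle (1:ℝ))

lemma measurable_qmap : Measurable (qmap d) :=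
  measurable_pi_lambda _ fun i => AddCircle.measurable_mk'.comp (measurable_pi_apply i)

lemma coe_intCast_addCircle (n : ℤ) : ((n : ℝ) : AddCircle (1:ℝ)) = 0 := by
  rw [AddCircle.coe_eq_zero_iff]
  exact ⟨n, by simp⟩

lemma qmap_add_intVec (x : Fin d → ℝ) (k : Fin d → ℤ) :
    qmap d (x + intVec k) = qmap d x := by
  funext i
  show ((x i + (k i : ℝ) : ℝ) : AddCircle (1:ℝ)) = (x i : AddCircle (1:ℝ))
  rw [AddCircle.coe_add, coe_intCast_addCircle, add_zero]

lemma qmap_sub_intVec (x : Fin d → ℝ) (k : Fin d → ℤ) :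
    qmap d (x - intVec k) = qmap d x := by
  have := qmap_add_intVec (x - intVec k) k
  simpa using this.symm

lemma volume1_eq_haar : (volume : Measure (AddCircle (1:ℝ))) = AddCircle.haarAddCircle := by
  rw [AddCircle.volume_eq_smul_haarAddCircle]; simp

instance : IsProbabilityMeasure (volume : Measure (AddCircle (1:ℝ))) := by
  rw [volume1_eq_haar]; infer_instance

instance : IsProbabilityMeasure (volume : Measure (Td d)) := by
  rw [volume_pi]; infer_instance

lemma map_qmap_unitCube :
    Measure.map (qmap d) (volume.restrict (unitCube d)) = volume := by
  rw [volume_pi (α := fun _ : Fin d => AddCircle (1:ℝ))]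
  refine (Measure.pi_eq (μ := fun _ : Fin d => (volume : Measure (AddCircle (1:ℝ)))) fun s hs => ?_).symm
  have hpre : qmap d ⁻¹' (Set.univ.pi s) = Set.univ.pi
      fun i => ((↑) : ℝ → AddCircle (1:ℝ)) ⁻¹' (s i) := by
    ext x; simp [qmap, Set.mem_pi]
  have hmeas : ∀ i, MeasurableSet (((↑) : ℝ → AddCircle (1:ℝ)) ⁻¹' (s i)) :=
    fun i => (hs i).preimage AddCircle.measurable_mk'
  rw [Measure.map_apply measurable_qmap (MeasurableSet.univ_pi hs), hpre,
    Measure.restrict_apply (MeasurableSet.univ_pi hmeas)]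
  have : (Set.univ.pi fun i => ((↑) : ℝ → AddCircle (1:ℝ)) ⁻¹' (s i)) ∩ unitCube d
      = Set.univ.pi fun i => (((↑) : ℝ → AddCircle (1:ℝ)) ⁻¹' (s i) ∩ Set.Ioc 0 1) := by
    rw [unitCube, ← Set.pi_inter_distrib]
  rw [this, volume_pi_pi]
  refine Finset.prod_congr rfl fun i _ => ?_
  have h1 : volume (((↑) : ℝ → AddCircle (1:ℝ)) ⁻¹' (s i) ∩ Set.Ioc 0 1)
      = (volume.restrict (Set.Ioc (0:ℝ) (0 + 1))) (((↑) : ℝ → AddCircle (1:ℝ)) ⁻¹' (s i)) := by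
    rw [Measure.restrict_apply (hmeas i)]
    norm_num
  rw [h1, ← Measure.map_apply AddCircle.measurable_mk' (hs i),
    (AddCircle.measurePreserving_mk (1:ℝ) (0:ℝ)).map_eq]

lemma map_qmap_tile {D : Set (Fin d → ℝ)} (hDm : MeasurableSet D)
    (hD : TilesBy D intVec) :
    Measure.map (qmap d) (volume.restrict D) = volume := by
  rw [← map_qmap_unitCube]
  ext A hA
  rw [Measure.map_apply measurable_qmap hA, Measure.map_apply measurable_qmap hA,
    Measure.restrict_apply (hA.preimage measurable_qmap),
    Measure.restrict_apply (hA.preimage measurable_qmap)]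
  exact measure_inter_tile_eq (hA.preimage measurable_qmap)
    (fun k => by
      rw [setTranslate_eq_preimage]
      ext x
      simp only [Set.mem_preimage]
      rw [qmap_sub_intVec])
    hDm hD measurableSet_unitCube unitCube_tiles



/-- multidimensional Fourier character on the torus -/
def mChar (l : Fin d → ℤ) : C(Td d, ℂ) where
  toFun y := ∏ i, fourier (l i) (y i)
  continuous_toFun := continuous_finset_prod _ fun i _ =>
    (fourier (l i)).continuous.comp (continuous_apply i)

@[simp] lemma mChar_apply (l : Fin d → ℤ) (y : Td d) :
    mChar l y = ∏ i, fourier (l i) (y i) := rfl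

lemma mChar_zero : mChar (d := d) 0 = 1 := by
  ext y
  simp only [mChar_apply, Pi.zero_apply, ContinuousMap.one_apply]
  refine Finset.prod_eq_one fun i _ => fourier_zero

lemma mChar_add (l l' : Fin d → ℤ) : mChar (l + l') = mChar l * mChar l' := by
  ext y
  simp only [mChar_apply, ContinuousMap.mul_apply, Pi.add_apply]
  rw [← Finset.prod_mul_distrib]
  exact Finset.prod_congr rfl fun i _ => fourier_add

lemma mChar_neg (l : Fin d → ℤ) (y : Td d) : mChar (-l) y = conj (mChar l y) := by
  simp only [mChar_apply, Pi.neg_apply]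
  rw [map_prod]
  exact Finset.prod_congr rfl fun i _ => fourier_neg

/-- star subalgebra generated by the characters -/
def mSubalgebra (d : ℕ) : StarSubalgebra ℂ C(Td d, ℂ) where
  toSubalgebra := Algebra.adjoin ℂ (Set.range (mChar (d := d)))
  star_mem' := by
    show Algebra.adjoin ℂ (Set.range (mChar (d := d))) ≤
      star (Algebra.adjoin ℂ (Set.range (mChar (d := d))))
    refine Algebra.adjoin_le ?_
    rintro - ⟨l, rfl⟩
    exact Algebra.subset_adjoin ⟨-l, ContinuousMap.ext fun y => mChar_neg l y⟩

lemma mSubalgebra_coe :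
    Subalgebra.toSubmodule (mSubalgebra d).toSubalgebra
      = span ℂ (Set.range (mChar (d := d))) := by
  apply Algebra.adjoin_eq_span_of_subset
  refine Set.Subset.trans ?_ Submodule.subset_span
  intro x hx
  refine Submonoid.closure_induction (fun _ => id) ⟨0, ?_⟩ ?_ hx
  · exact mChar_zero
  · rintro - - - - ⟨m, rfl⟩ ⟨n, rfl⟩
    exact ⟨m + n, mChar_add m n⟩

lemma mSubalgebra_separatesPoints : (mSubalgebra d).SeparatesPoints := by
  intro x y hxy
  have : ∃ i, x i ≠ y i := by
    by_contra h
    push_neg at h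
    exact hxy (funext h)
  obtain ⟨i, hi⟩ := this
  refine ⟨_, ⟨mChar (Pi.single i 1), Algebra.subset_adjoin ⟨Pi.single i 1, rfl⟩, rfl⟩, ?_⟩
  have key : ∀ z : Td d, mChar (Pi.single i 1) z = fourier 1 (z i) := by
    intro z
    rw [mChar_apply]
    rw [Finset.prod_eq_single i]
    · simp
    · intro j _ hj
      rw [Pi.single_eq_of_ne hj]
      exact fourier_zero
    · simp
  dsimp only
  rw [key, key, fourier_one, fourier_one]
  intro h
  rw [Circle.coe_inj] at h
  exact hi (AddCircle.injective_toCircle one_ne_zero h)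

lemma mSubalgebra_closure_eq_top : (mSubalgebra d).topologicalClosure = ⊤ :=
  ContinuousMap.starSubalgebra_topologicalClosure_eq_top_of_separatesPoints _
    mSubalgebra_separatesPoints

lemma span_mChar_closure_eq_top :
    (span ℂ (Set.range (mChar (d := d)))).topologicalClosure = ⊤ := by
  rw [← mSubalgebra_coe]
  exact congr_arg (Subalgebra.toSubmodule <| StarSubalgebra.toSubalgebra ·)
    mSubalgebra_closure_eq_top

/-- characters as L² elements -/
abbrev mCharLp (l : Fin d → ℤ) : Lp ℂ 2 (volume : Measure (Td d)) :=
  ContinuousMap.toLp (E := ℂ) 2 volume ℂ (mChar l)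

lemma span_mCharLp_closure_eq_top :
    (span ℂ (Set.range (mCharLp (d := d)))).topologicalClosure = ⊤ := by
  convert (ContinuousMap.toLp_denseRange ℂ (volume : Measure (Td d)) ℂ
    (by norm_num : (2:ℝ≥0∞) ≠ ∞)).topologicalClosure_map_submodule
      span_mChar_closure_eq_top
  · rfl
  erw [map_span, Set.range_comp]
  simp only [ContinuousLinearMap.coe_coe]

lemma integral_fourier_addCircle (n : ℤ) :
    (∫ y : AddCircle (1:ℝ), fourier n y) = if n = 0 then 1 else 0 := by
  split_ifs with h
  · subst h
    have : ⇑(fourier (T := 1) 0) = (fun _ => 1 : AddCircle (1:ℝ) → ℂ) := by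
      ext1; exact fourier_zero
    rw [this, integral_const, probReal_univ]
    simp
  · rw [volume1_eq_haar]
    exact integral_eq_zero_of_add_right_eq_neg
      (fourier_add_half_inv_index h one_pos)

lemma orthonormal_mCharLp : Orthonormal ℂ (mCharLp (d := d)) := by
  rw [orthonormal_iff_ite]
  intro i j
  rw [ContinuousMap.inner_toLp (μ := (volume : Measure (Td d))) (mChar i) (mChar j)]
  have hint : ∀ y : Td d, conj (mChar i y) * mChar j y
      = ∏ k, fourier (-(i k) + j k) (y k) := by
    intro y
    simp only [mChar_apply, map_prod, ← Finset.prod_mul_distrib]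
    exact Finset.prod_congr rfl fun k _ => by rw [← fourier_neg, ← fourier_add]
  simp_rw [mul_comm (mChar j _), hint]
  have sf : ∀ i : Fin d, SigmaFinite (volume : Measure (AddCircle (1:ℝ))) :=
    fun _ => inferInstance
  rw [volume_pi, MeasureTheory.integral_fintype_prod_eq_prod
    (fun k (y : AddCircle (1:ℝ)) => fourier (-(i k) + j k) y)]
  simp_rw [integral_fourier_addCircle]
  by_cases h : i = j
  · subst h; simp
  · rw [if_neg h]
    have : ∃ k, i k ≠ j k := by
      by_contra hc; push_neg at hc; exact h (funext hc)
    obtain ⟨k, hk⟩ := this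
    refine Finset.prod_eq_zero (Finset.mem_univ k) ?_
    rw [if_neg]
    · intro hc
      exact hk (by omega)

/-- the Hilbert basis of characters on the torus -/
def mFourierBasis : HilbertBasis (Fin d → ℤ) ℂ (Lp ℂ 2 (volume : Measure (Td d))) :=
  HilbertBasis.mk orthonormal_mCharLp (span_mCharLp_closure_eq_top).ge

lemma coe_mFourierBasis : ⇑(mFourierBasis (d := d)) = mCharLp :=
  HilbertBasis.coe_mk _ _

/-- bilinear Parseval identity on the torus -/
lemma torus_parseval (Φ₁ Φ₂ : Td d → ℂ) (h₁ : MemLp Φ₁ 2 (volume : Measure (Td d)))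
    (h₂ : MemLp Φ₂ 2 (volume : Measure (Td d))) :
    ∑' l : Fin d → ℤ, (∫ y, Φ₁ y * conj (mChar l y)) * conj (∫ y, Φ₂ y * conj (mChar l y))
      = ∫ y, Φ₁ y * conj (Φ₂ y) := by
  set X := h₁.toLp Φ₁ with hX
  set Y := h₂.toLp Φ₂ with hY
  have inner_eq : ∀ (Φ : Td d → ℂ) (h : MemLp Φ 2 (volume : Measure (Td d))) (l : Fin d → ℤ),
      (inner ℂ (h.toLp Φ) (mFourierBasis l) : ℂ) = ∫ y, conj (Φ y) * mChar l y := by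
    intro Φ h l
    rw [coe_mFourierBasis]
    rw [MeasureTheory.L2.inner_def]
    apply integral_congr_ae
    filter_upwards [h.coeFn_toLp, ContinuousMap.coeFn_toLp (p := 2) (𝕜 := ℂ)
      (volume : Measure (Td d)) (mChar l)] with y hy1 hy2
    rw [hy1, hy2, RCLike.inner_apply, mul_comm]
  have term_eq : ∀ l : Fin d → ℤ,
      (∫ y, Φ₁ y * conj (mChar l y)) * conj (∫ y, Φ₂ y * conj (mChar l y))
        = conj ((inner ℂ X (mFourierBasis l) : ℂ) * (inner ℂ (mFourierBasis l) Y : ℂ)) := by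
    intro l
    have e0 : ∀ (Φ : Td d → ℂ) (h : MemLp Φ 2 (volume : Measure (Td d))),
        (∫ y, Φ y * conj (mChar l y)) = conj ((inner ℂ (h.toLp Φ) (mFourierBasis l) : ℂ)) := by
      intro Φ h
      rw [inner_eq Φ h l, ← integral_conj]
      congr 1; funext y
      rw [_root_.map_mul, Complex.conj_conj]
    rw [hX, hY, e0 Φ₁ h₁, e0 Φ₂ h₂, Complex.conj_conj, _root_.map_mul, inner_conj_symm, inner_conj_symm]
  calc ∑' l : Fin d → ℤ,
      (∫ y, Φ₁ y * conj (mChar l y)) * conj (∫ y, Φ₂ y * conj (mChar l y))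
      = ∑' l : Fin d → ℤ,
        conj ((inner ℂ X (mFourierBasis l) : ℂ) * (inner ℂ (mFourierBasis l) Y : ℂ)) := by
        exact tsum_congr term_eq
    _ = conj (∑' l : Fin d → ℤ,
        (inner ℂ X (mFourierBasis l) : ℂ) * (inner ℂ (mFourierBasis l) Y : ℂ)) := by
        exact (tsum_star (f := fun l : Fin d → ℤ =>
          (inner ℂ X (mFourierBasis l) : ℂ) * (inner ℂ (mFourierBasis l) Y : ℂ))).symm
    _ = conj ((inner ℂ X Y : ℂ)) := by rw [mFourierBasis.tsum_inner_mul_inner X Y]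
    _ = ∫ y, Φ₁ y * conj (Φ₂ y) := by
        rw [MeasureTheory.L2.inner_def, ← integral_conj]
        apply integral_congr_ae
        filter_upwards [h₁.coeFn_toLp, h₂.coeFn_toLp] with y hy1 hy2
        rw [RCLike.inner_apply, _root_.map_mul, Complex.conj_conj, hX, hY, hy1, hy2, mul_comm]

lemma mChar_qmap (l : Fin d → ℤ) (x : Fin d → ℝ) :
    mChar l (qmap d x) = e2pi (intVec l ⬝ᵥ x) := by
  have h1 : ∀ i, fourier (T := 1) (l i) ((x i : ℝ) : AddCircle (1:ℝ))
      = Complex.exp (2 * Real.pi * Complex.I * ((l i : ℝ) * x i : ℝ)) := by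
    intro i
    rw [fourier_coe_apply]
    congr 1
    push_cast
    ring
  simp only [mChar_apply, qmap]
  simp_rw [h1, ← Complex.exp_sum]
  unfold e2pi
  congr 1
  rw [dotProduct]
  push_cast
  rw [Finset.mul_sum]
  simp [intVec]

/-- a measurable function on the torus agreeing a.e. on a packing set with a given function -/
lemma exists_section {D : Set (Fin d → ℝ)} (hDm : MeasurableSet D)
    (hpack : PacksBy D intVec) (F : (Fin d → ℝ) → ℂ) (hF : StronglyMeasurable F) :
    ∃ Φ : Td d → ℂ, StronglyMeasurable Φ ∧
      ∀ᵐ x ∂(volume.restrict D), Φ (qmap d x) = F x := by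
  classical
  set N : Set (Fin d → ℝ) :=
    ⋃ k : {k : Fin d → ℤ // k ≠ 0}, D ∩ setTranslate (intVec k.1) D with hN
  have hNnull : volume N = 0 := by
    refine measure_iUnion_null fun k => ?_
    have := hpack 0 k.1 (Ne.symm k.2)
    rwa [intVec_zero, setTranslate_zero] at this
  have hNm : MeasurableSet N :=
    MeasurableSet.iUnion fun k => hDm.inter (measurableSet_setTranslate hDm _)
  set s : Set (Fin d → ℝ) := D \ N with hs
  have hsm : MeasurableSet s := hDm.diff hNm
  haveI : StandardBorelSpace s := hsm.standardBorel
  set e : s → Td d := fun x => qmap d x.1 with he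
  have hinj : Function.Injective e := by
    rintro ⟨x, hxD, hxN⟩ ⟨y, hyD, hyN⟩ hxy
    have hcomp : ∀ i, ∃ n : ℤ, (n : ℝ) = y i - x i := by
      intro i
      have : ((x i : ℝ) : AddCircle (1:ℝ)) = ((y i : ℝ) : AddCircle (1:ℝ)) :=
        congrFun hxy i
      have h0 : ((y i - x i : ℝ) : AddCircle (1:ℝ)) = 0 := by
        rw [AddCircle.coe_sub, this]
        simp
      rw [AddCircle.coe_eq_zero_iff] at h0
      obtain ⟨n, hn⟩ := h0
      exact ⟨n, by simpa using hn⟩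
    choose k hk using hcomp
    have hyx : y = x + intVec k := by
      funext i
      have := hk i
      simp only [intVec, Pi.add_apply]
      linarith
    by_cases hk0 : k = 0
    · subst hk0
      apply Subtype.ext
      show x = y
      rw [hyx, intVec_zero, add_zero]
    · exfalso
      apply hyN
      rw [hN]
      refine Set.mem_iUnion.2 ⟨⟨k, hk0⟩, ⟨hyD, ?_⟩⟩
      rw [mem_setTranslate, hyx]
      simpa using hxD
  have hemeas : Measurable e := measurable_qmap.comp measurable_subtype_coe
  have hemb : MeasurableEmbedding e := hemeas.measurableEmbedding hinj
  refine ⟨Function.extend e (fun x : s => F x.1) (fun _ => 0), ?_, ?_⟩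
  · exact (hemb.measurable_extend (hF.measurable.comp measurable_subtype_coe)
      measurable_const).stronglyMeasurable
  · have h1 : ∀ᵐ x ∂(volume.restrict D), x ∈ D := ae_restrict_mem hDm
    have h2 : ∀ᵐ x ∂(volume.restrict D), x ∉ N := by
      have : (volume.restrict D) N = 0 :=
        le_antisymm (le_trans (Measure.restrict_apply_le D N) hNnull.le) zero_le
      exact (ae_iff.2 (by simpa using this))
    filter_upwards [h1, h2] with x hxD hxN
    have : Function.extend e (fun x : s => F x.1) (fun _ => 0) (e ⟨x, hxD, hxN⟩)
        = F x := hinj.extend_apply _ _ _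
    exact this

/-- Parseval orthogonality on a fundamental tile -/
lemma parseval_on_tile {D : Set (Fin d → ℝ)} (hDm : MeasurableSet D)
    (hDt : TilesBy D intVec) {F₁ F₂ : (Fin d → ℝ) → ℂ}
    (h1m : StronglyMeasurable F₁) (h2m : StronglyMeasurable F₂)
    (h1 : MemLp F₁ 2 (volume.restrict D)) (h2 : MemLp F₂ 2 (volume.restrict D))
    (hprod : (fun x => F₁ x * conj (F₂ x)) =ᵐ[volume.restrict D] 0) :
    ∑' l : Fin d → ℤ, (∫ x in D, F₁ x * e2pi (intVec l ⬝ᵥ x))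
      * conj (∫ x in D, F₂ x * e2pi (intVec l ⬝ᵥ x)) = 0 := by
  obtain ⟨Φ₁, hΦ₁m, hΦ₁⟩ := exists_section hDm hDt.1 F₁ h1m
  obtain ⟨Φ₂, hΦ₂m, hΦ₂⟩ := exists_section hDm hDt.1 F₂ h2m
  have hmap := map_qmap_tile hDm hDt
  have hL : ∀ (Φ : Td d → ℂ), StronglyMeasurable Φ →
      (∀ᵐ x ∂(volume.restrict D), Φ (qmap d x) = F₁ x) ∨ True →
      True := fun _ _ _ => trivial
  have hMem : ∀ (Φ : Td d → ℂ) (F : (Fin d → ℝ) → ℂ), StronglyMeasurable Φ →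
      MemLp F 2 (volume.restrict D) →
      (∀ᵐ x ∂(volume.restrict D), Φ (qmap d x) = F x) →
      MemLp Φ 2 (volume : Measure (Td d)) := by
    intro Φ F hΦm hF hae
    rw [← hmap]
    rw [memLp_map_measure_iff hΦm.aestronglyMeasurable measurable_qmap.aemeasurable]
    exact hF.ae_eq (by filter_upwards [hae] with x hx using hx.symm)
  have hΦ₁L := hMem Φ₁ F₁ hΦ₁m h1 hΦ₁
  have hΦ₂L := hMem Φ₂ F₂ hΦ₂m h2 hΦ₂
  have hcoeff : ∀ (Φ : Td d → ℂ) (F : (Fin d → ℝ) → ℂ), StronglyMeasurable Φ →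
      (∀ᵐ x ∂(volume.restrict D), Φ (qmap d x) = F x) → ∀ l : Fin d → ℤ,
      (∫ x in D, F x * e2pi (intVec l ⬝ᵥ x)) = ∫ y, Φ y * conj (mChar (-l) y) := by
    intro Φ F hΦm hae l
    have e1 : (∫ y, Φ y * conj (mChar (-l) y)) = ∫ y, Φ y * mChar l y := by
      congr 1; funext y; rw [mChar_neg, Complex.conj_conj]
    rw [e1, ← hmap, integral_map measurable_qmap.aemeasurable]
    · apply integral_congr_ae
      filter_upwards [hae] with x hx
      rw [hx, mChar_qmap]
    · rw [hmap]
      exact (hΦm.mul (mChar l).continuous.stronglyMeasurable).aestronglyMeasurable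
  have hsum : ∀ l : Fin d → ℤ,
      (∫ x in D, F₁ x * e2pi (intVec l ⬝ᵥ x)) * conj (∫ x in D, F₂ x * e2pi (intVec l ⬝ᵥ x))
      = (fun l' : Fin d → ℤ => (∫ y, Φ₁ y * conj (mChar l' y))
          * conj (∫ y, Φ₂ y * conj (mChar l' y))) (-l) := by
    intro l
    simp only
    rw [hcoeff Φ₁ F₁ hΦ₁m hΦ₁ l, hcoeff Φ₂ F₂ hΦ₂m hΦ₂ l]
  calc ∑' l : Fin d → ℤ, (∫ x in D, F₁ x * e2pi (intVec l ⬝ᵥ x))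
      * conj (∫ x in D, F₂ x * e2pi (intVec l ⬝ᵥ x))
      = ∑' l : Fin d → ℤ, (fun l' : Fin d → ℤ => (∫ y, Φ₁ y * conj (mChar l' y))
          * conj (∫ y, Φ₂ y * conj (mChar l' y))) (-l) := tsum_congr hsum
    _ = ∑' l : Fin d → ℤ, (∫ y, Φ₁ y * conj (mChar l y))
          * conj (∫ y, Φ₂ y * conj (mChar l y)) := by
        exact (Equiv.neg (Fin d → ℤ)).tsum_eq (fun l' : Fin d → ℤ =>
          (∫ y, Φ₁ y * conj (mChar l' y)) * conj (∫ y, Φ₂ y * conj (mChar l' y)))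
    _ = ∫ y, Φ₁ y * conj (Φ₂ y) := torus_parseval Φ₁ Φ₂ hΦ₁L hΦ₂L
    _ = ∫ x in D, F₁ x * conj (F₂ x) := by
        rw [← hmap, integral_map measurable_qmap.aemeasurable]
        · apply integral_congr_ae
          filter_upwards [hΦ₁, hΦ₂] with x hx1 hx2
          rw [hx1, hx2]
        · rw [hmap]
          exact (hΦ₁m.mul (continuous_star.comp_stronglyMeasurable hΦ₂m)).aestronglyMeasurable
    _ = 0 := by
        rw [integral_congr_ae hprod]
        simp


lemma measurable_mulVec (M : Matrix (Fin d) (Fin d) ℝ) :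
    Measurable (fun x : Fin d → ℝ => M.mulVec x) := by
  refine measurable_pi_lambda _ fun i => ?_
  simp only [Matrix.mulVec, dotProduct]
  exact Finset.measurable_sum Finset.univ fun j _ => by fun_prop

lemma continuous_e2pi : Continuous e2pi :=
  Complex.continuous_exp.comp (continuous_const.mul Complex.continuous_ofReal)

lemma measurable_dot (v : Fin d → ℝ) : Measurable (fun x : Fin d → ℝ => v ⬝ᵥ x) := by
  simp only [dotProduct]
  exact Finset.measurable_sum Finset.univ fun j _ => by fun_prop

lemma conj_e2pi (x : ℝ) : conj (e2pi x) = e2pi (-x) := by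
  unfold e2pi
  rw [← Complex.exp_conj]
  simp only [_root_.map_mul, Complex.conj_I, Complex.conj_ofReal, map_ofNat]
  push_cast
  ring

lemma conj_indicator {E : Set (Fin d → ℝ)} (y : Fin d → ℝ) :
    conj (E.indicator (1 : (Fin d → ℝ) → ℂ) y) = E.indicator 1 y := by
  by_cases hy : y ∈ E <;> simp [Set.indicator_apply, hy]

/-- the key per-translate coefficient identity -/
lemma coeff_eq (B : Matrix (Fin d) (Fin d) ℝ) (hB : IsUnit B.det)
    (E : Set (Fin d → ℝ)) (hE : MeasurableSet E)
    (f' : (Fin d → ℝ) → ℂ) (hf'm : StronglyMeasurable f')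
    (mv l : Fin d → ℤ) (D : Set (Fin d → ℝ)) (hDm : MeasurableSet D)
    (hWD : ((fun x => B.transpose.mulVec x) '' setTranslate (intVec mv) E) ⊆ D) :
    (∫ t, f' t * conj (gaborOp B mv l (fun x => (Real.sqrt |B.det| : ℂ) * E.indicator 1 x) t))
      = ((Real.sqrt |B.det| * |B.det|⁻¹ : ℝ) : ℂ) *
        ∫ s in D, (((fun x => B.transpose.mulVec x) '' setTranslate (intVec mv) E).indicator
            (fun s => f' ((B.transpose)⁻¹.mulVec s)) s) * e2pi (intVec l ⬝ᵥ s) := by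
  classical
  have hdet : B.det ≠ 0 := hB.ne_zero
  have hdetT : B.transpose.det ≠ 0 := by rwa [Matrix.det_transpose]
  have hBTunit : IsUnit B.transpose.det := by rwa [Matrix.det_transpose]
  set W : Set (Fin d → ℝ) := (fun x => B.transpose.mulVec x) '' setTranslate (intVec mv) E
    with hW
  set σ : Matrix (Fin d) (Fin d) ℝ := (B.transpose)⁻¹ with hσ
  have hστ : ∀ x, σ.mulVec (B.transpose.mulVec x) = x := by
    intro x
    rw [Matrix.mulVec_mulVec, Matrix.nonsing_inv_mul _ hBTunit, Matrix.one_mulVec]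
  have hτσ : ∀ x, B.transpose.mulVec (σ.mulVec x) = x := by
    intro x
    rw [Matrix.mulVec_mulVec, Matrix.mul_nonsing_inv _ hBTunit, Matrix.one_mulVec]
  have hWpre : W = (fun x => σ.mulVec x) ⁻¹' (setTranslate (intVec mv) E) := by
    ext x
    constructor
    · rintro ⟨s, hs, rfl⟩
      simpa [hστ] using hs
    · intro hx
      exact ⟨σ.mulVec x, hx, hτσ x⟩
  have hWm : MeasurableSet W := by
    rw [hWpre]
    exact (measurableSet_setTranslate hE _).preimage (measurable_mulVec σ)
  set F : (Fin d → ℝ) → ℂ := W.indicator (fun s => f' (σ.mulVec s)) with hF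
  set ψ : (Fin d → ℝ) → ℂ := fun s => F s * e2pi (intVec l ⬝ᵥ s) with hψ
  have hψm : StronglyMeasurable ψ := by
    apply StronglyMeasurable.mul
    · exact (hf'm.comp_measurable (measurable_mulVec σ)).indicator hWm
    · exact ((continuous_e2pi.measurable.comp (measurable_dot (intVec l)))).stronglyMeasurable
  have hintegrand : ∀ t, f' t * conj (gaborOp B mv l
      (fun x => (Real.sqrt |B.det| : ℂ) * E.indicator 1 x) t)
      = (Real.sqrt |B.det| : ℂ) * ψ (B.transpose.mulVec t) := by
    intro t
    have hdot : B.mulVec (intVec l) ⬝ᵥ t = intVec l ⬝ᵥ B.transpose.mulVec t := by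
      rw [dotProduct_comm, Matrix.dotProduct_mulVec, ← Matrix.vecMul_transpose,
        Matrix.transpose_transpose, dotProduct_comm]
    have hconj : conj (gaborOp B mv l
        (fun x => (Real.sqrt |B.det| : ℂ) * E.indicator 1 x) t)
        = e2pi (intVec l ⬝ᵥ B.transpose.mulVec t) *
          ((Real.sqrt |B.det| : ℂ) * E.indicator 1 (t - intVec mv)) := by
      unfold gaborOp
      rw [_root_.map_mul, conj_e2pi, neg_neg, _root_.map_mul, Complex.conj_ofReal, conj_indicator, hdot]
    rw [hconj]
    have hFT : F (B.transpose.mulVec t) = f' t * E.indicator 1 (t - intVec mv) := by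
      rw [hF]
      by_cases ht : t ∈ setTranslate (intVec mv) E
      · rw [Set.indicator_of_mem, hστ]
        · have : E.indicator (1 : (Fin d → ℝ) → ℂ) (t - intVec mv) = 1 := by
            rw [Set.indicator_of_mem]
            · rfl
            · exact mem_setTranslate.mp ht
          rw [this, mul_one]
        · rw [hWpre]
          simpa [hστ] using ht
      · rw [Set.indicator_of_notMem, Set.indicator_of_notMem, mul_zero]
        · exact fun h => ht (mem_setTranslate.mpr h)
        · rw [hWpre]
          simpa [hστ] using ht
    rw [hψ]
    simp only
    rw [hFT]
    ring
  calc (∫ t, f' t * conj (gaborOp B mv l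
        (fun x => (Real.sqrt |B.det| : ℂ) * E.indicator 1 x) t))
      = ∫ t, (Real.sqrt |B.det| : ℂ) * ψ (B.transpose.mulVec t) := by
        exact integral_congr_ae (Filter.Eventually.of_forall hintegrand)
    _ = (Real.sqrt |B.det| : ℂ) * ∫ t, ψ (B.transpose.mulVec t) := integral_const_mul _ _
    _ = (Real.sqrt |B.det| : ℂ) * ∫ t, ψ ((Matrix.toLin' B.transpose) t) := by
        congr 1
    _ = (Real.sqrt |B.det| : ℂ) * ∫ y, ψ y ∂(Measure.map (Matrix.toLin' B.transpose) volume) := by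
        congr 1
        rw [integral_map
          ((Matrix.toLin' B.transpose).continuous_of_finiteDimensional.measurable.aemeasurable)
          hψm.aestronglyMeasurable]
    _ = (Real.sqrt |B.det| : ℂ) * ∫ y, ψ y ∂(ENNReal.ofReal |(B.transpose.det)⁻¹| • volume) := by
        rw [Real.map_matrix_volume_pi_eq_smul_volume_pi hdetT]
    _ = (Real.sqrt |B.det| : ℂ) * ((|B.det|⁻¹ : ℝ) • ∫ y, ψ y) := by
        rw [integral_smul_measure, ENNReal.toReal_ofReal (abs_nonneg _)]
        rw [abs_inv, Matrix.det_transpose]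
    _ = ((Real.sqrt |B.det| * |B.det|⁻¹ : ℝ) : ℂ) * ∫ y, ψ y := by
        rw [Complex.real_smul, Complex.ofReal_mul]
        ring
    _ = ((Real.sqrt |B.det| * |B.det|⁻¹ : ℝ) : ℂ) * ∫ s in D, ψ s := by
        congr 1
        have : ψ = D.indicator ψ := by
          funext s
          by_cases hs : s ∈ D
          · rw [Set.indicator_of_mem hs]
          · rw [Set.indicator_of_notMem hs, hψ]
            simp only
            rw [hF, Set.indicator_of_notMem, zero_mul]
            exact fun h => hs (hWD h)
        rw [← integral_indicator hDm, ← this]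


/-- `MemLp` of `f ∘ (M⁻¹ mulVec)` for invertible `M` -/
lemma memLp_comp_mulVec {M : Matrix (Fin d) (Fin d) ℝ} (hM : M.det ≠ 0)
    {f : (Fin d → ℝ) → ℂ} (hfm : StronglyMeasurable f) (hf : MemLp f 2 volume) :
    MemLp (fun x => f (M.mulVec x)) 2 volume := by
  have hmap := Real.map_matrix_volume_pi_eq_smul_volume_pi hM
  have h1 : MemLp f 2 (Measure.map (Matrix.toLin' M) volume) := by
    rw [hmap]
    exact hf.smul_measure ENNReal.ofReal_ne_top
  have h2 := (memLp_map_measure_iff hfm.aestronglyMeasurable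
    (Matrix.toLin' M).continuous_of_finiteDimensional.measurable.aemeasurable).mp h1
  have : (fun x => f (M.mulVec x)) = f ∘ (Matrix.toLin' M) := by
    funext x; simp [Matrix.toLin'_apply]
  rw [this]
  exact h2

/-- summability of the coefficient norms for a Parseval frame -/
lemma summable_coeff {ι : Type*} [Countable ι] {F : ι → (Fin d → ℝ) → ℂ}
    (hframe : IsParsevalFrame (volume : Measure (Fin d → ℝ)) F)
    (f : (Fin d → ℝ) → ℂ) (hf : MemLp f 2 volume) :
    Summable (fun i : ι => ‖∫ x, f x * conj (F i x)‖ ^ 2) := by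
  by_contra hns
  have h0 := tsum_eq_zero_of_not_summable hns
  have heq := hframe f hf
  rw [h0] at heq
  have hint : Integrable (fun x => ‖f x‖ ^ 2) volume := by
    have h := hf.integrable_norm_rpow (by norm_num) (by norm_num)
    refine h.congr (Filter.Eventually.of_forall fun x => ?_)
    have h2 : (2 : ℝ≥0∞).toReal = (2 : ℝ) := by norm_num
    rw [h2]
    have := Real.rpow_natCast ‖f x‖ 2
    norm_num at this ⊢
  have hzero' : (fun x => ‖f x‖ ^ 2) =ᵐ[(volume : Measure (Fin d → ℝ))] 0 := by
    rw [← integral_eq_zero_iff_of_nonneg (fun x => sq_nonneg _) hint]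
    exact heq.symm
  have hzero : ∀ᵐ x ∂(volume : Measure (Fin d → ℝ)), ‖f x‖ ^ 2 = 0 := by
    filter_upwards [hzero'] with x hx
    simpa using hx
  have hf0 : ∀ᵐ x ∂(volume : Measure (Fin d → ℝ)), f x = 0 := by
    filter_upwards [hzero] with x hx
    have : ‖f x‖ = 0 := by
      nlinarith [norm_nonneg (f x)]
    exact norm_eq_zero.mp this
  apply hns
  have hc0 : ∀ i, (∫ x, f x * conj (F i x)) = 0 := by
    intro i
    rw [show (0 : ℂ) = ∫ x : Fin d → ℝ, (0 : ℂ) by simp]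
    apply integral_congr_ae
    filter_upwards [hf0] with x hx
    rw [hx, zero_mul]
  have : (fun i : ι => ‖∫ x, f x * conj (F i x)‖ ^ 2) = fun _ => 0 := by
    funext i; rw [hc0 i]; simp
  rw [this]
  exact summable_zero

lemma image_mulVec_eq_preimage (B : Matrix (Fin d) (Fin d) ℝ) (hB : IsUnit B.det)
    (S : Set (Fin d → ℝ)) :
    (fun x => B.transpose.mulVec x) '' S = (fun x => (B.transpose)⁻¹.mulVec x) ⁻¹' S := by
  have hBTunit : IsUnit B.transpose.det := by rwa [Matrix.det_transpose]
  have hστ : ∀ x, (B.transpose)⁻¹.mulVec (B.transpose.mulVec x) = x := by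
    intro x
    rw [Matrix.mulVec_mulVec, Matrix.nonsing_inv_mul _ hBTunit, Matrix.one_mulVec]
  have hτσ : ∀ x, B.transpose.mulVec ((B.transpose)⁻¹.mulVec x) = x := by
    intro x
    rw [Matrix.mulVec_mulVec, Matrix.mul_nonsing_inv _ hBTunit, Matrix.one_mulVec]
  ext x
  constructor
  · rintro ⟨s, hs, rfl⟩
    simpa [hστ] using hs
  · intro hx
    exact ⟨(B.transpose)⁻¹.mulVec x, hx, hτσ x⟩

lemma det_inv_transpose_ne_zero (B : Matrix (Fin d) (Fin d) ℝ) (hB : IsUnit B.det) :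
    ((B.transpose)⁻¹).det ≠ 0 := by
  have hBTunit : IsUnit B.transpose.det := by rwa [Matrix.det_transpose]
  rw [Matrix.det_nonsing_inv]
  simp only [Ring.inverse_eq_inv']
  exact inv_ne_zero hBTunit.ne_zero

end GaborAux

open GaborAux

/-- Orthogonality of Gabor coefficient sequences. For `i = 1,2` let
`u_i = |det B_i|^{1/2} χ_{E_i}` where `E_i` tiles `ℝ^d` by `ℤ^d` and packs by
`B_i^{−tr}ℤ^d`, so that the Gabor families are Parseval frames. If for every `m ∈ ℤ^d`
the union `B_1^{tr}(E_1+m) ∪ B_2^{tr}(E_2+m)` fits in a measurable fundamental domain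
for `ℤ^d` and the intersection `B_1^{tr}(E_1+m) ∩ B_2^{tr}(E_2+m)` is Lebesgue-null,
then for all `f, g ∈ L²(ℝ^d)` the coefficient sequences are orthogonal in `ℓ²`. -/
theorem gabor_coefficient_sequences_orthogonal
    (d : ℕ) (hd : 1 ≤ d)
    (B₁ B₂ : Matrix (Fin d) (Fin d) ℝ) (hB₁ : IsUnit B₁.det) (hB₂ : IsUnit B₂.det)
    (E₁ E₂ : Set (Fin d → ℝ)) (hE₁ : MeasurableSet E₁) (hE₂ : MeasurableSet E₂)
    (htile₁ : TilesBy E₁ intVec) (htile₂ : TilesBy E₂ intVec)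
    (hpack₁ : PacksBy E₁ (fun k => (B₁.transpose)⁻¹.mulVec (intVec k)))
    (hpack₂ : PacksBy E₂ (fun k => (B₂.transpose)⁻¹.mulVec (intVec k)))
    (hframe₁ : IsParsevalFrame (volume : Measure (Fin d → ℝ))
      (fun q : (Fin d → ℤ) × (Fin d → ℤ) =>
        gaborOp B₁ q.1 q.2 fun x => (Real.sqrt |B₁.det| : ℂ) * E₁.indicator 1 x))
    (hframe₂ : IsParsevalFrame (volume : Measure (Fin d → ℝ))
      (fun q : (Fin d → ℤ) × (Fin d → ℤ) =>
        gaborOp B₂ q.1 q.2 fun x => (Real.sqrt |B₂.det| : ℂ) * E₂.indicator 1 x))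
    (hsub : ∀ mv : Fin d → ℤ, ∃ D : Set (Fin d → ℝ), IsFundDomain D ∧
      ((fun x => B₁.transpose.mulVec x) '' setTranslate (intVec mv) E₁) ∪
        ((fun x => B₂.transpose.mulVec x) '' setTranslate (intVec mv) E₂) ⊆ D)
    (hnull : ∀ mv : Fin d → ℤ,
      volume (((fun x => B₁.transpose.mulVec x) '' setTranslate (intVec mv) E₁) ∩
        ((fun x => B₂.transpose.mulVec x) '' setTranslate (intVec mv) E₂)) = 0) :
    ∀ f g : (Fin d → ℝ) → ℂ, MemLp f 2 volume → MemLp g 2 volume →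
      ∑' q : (Fin d → ℤ) × (Fin d → ℤ),
        (∫ t, f t * conj (gaborOp B₁ q.1 q.2
            (fun x => (Real.sqrt |B₁.det| : ℂ) * E₁.indicator 1 x) t)) *
          conj (∫ t, g t * conj (gaborOp B₂ q.1 q.2
            (fun x => (Real.sqrt |B₂.det| : ℂ) * E₂.indicator 1 x) t)) = 0 := by
  intro f g hf hg
  classical
  set c₁ : (Fin d → ℤ) × (Fin d → ℤ) → ℂ := fun q => ∫ t, f t * conj (gaborOp B₁ q.1 q.2
    (fun x => (Real.sqrt |B₁.det| : ℂ) * E₁.indicator 1 x) t) with hc₁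
  set c₂ : (Fin d → ℤ) × (Fin d → ℤ) → ℂ := fun q => ∫ t, g t * conj (gaborOp B₂ q.1 q.2
    (fun x => (Real.sqrt |B₂.det| : ℂ) * E₂.indicator 1 x) t) with hc₂
  show ∑' q : (Fin d → ℤ) × (Fin d → ℤ), c₁ q * conj (c₂ q) = 0
  -- strongly measurable representatives
  have hfm := hf.aestronglyMeasurable
  have hgm := hg.aestronglyMeasurable
  set f' := hfm.mk f with hf'def
  set g' := hgm.mk g with hg'def
  have hf'sm : StronglyMeasurable f' := hfm.stronglyMeasurable_mk
  have hg'sm : StronglyMeasurable g' := hgm.stronglyMeasurable_mk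
  have hff' : f =ᵐ[volume] f' := hfm.ae_eq_mk
  have hgg' : g =ᵐ[volume] g' := hgm.ae_eq_mk
  have hf' : MemLp f' 2 volume := hf.ae_eq hff'
  have hg' : MemLp g' 2 volume := hg.ae_eq hgg'
  -- summability
  have hS₁ : Summable (fun q : (Fin d → ℤ) × (Fin d → ℤ) => ‖c₁ q‖ ^ 2) :=
    summable_coeff hframe₁ f hf
  have hS₂ : Summable (fun q : (Fin d → ℤ) × (Fin d → ℤ) => ‖c₂ q‖ ^ 2) :=
    summable_coeff hframe₂ g hg
  have hprodsum : Summable (fun q : (Fin d → ℤ) × (Fin d → ℤ) => c₁ q * conj (c₂ q)) := by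
    apply Summable.of_norm
    have hb : ∀ q : (Fin d → ℤ) × (Fin d → ℤ),
        ‖c₁ q * conj (c₂ q)‖ ≤ (‖c₁ q‖ ^ 2 + ‖c₂ q‖ ^ 2) / 2 := by
      intro q
      rw [norm_mul, RCLike.norm_conj]
      nlinarith [sq_nonneg (‖c₁ q‖ - ‖c₂ q‖), norm_nonneg (c₁ q), norm_nonneg (c₂ q)]
    exact Summable.of_nonneg_of_le (fun q => norm_nonneg _) hb ((hS₁.add hS₂).div_const 2)
  -- the inner sums vanish
  have hinner : ∀ mv : Fin d → ℤ, ∑' l : Fin d → ℤ, c₁ (mv, l) * conj (c₂ (mv, l)) = 0 := by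
    intro mv
    obtain ⟨D, ⟨hDm, hDt⟩, hDsub⟩ := hsub mv
    have hWnull := hnull mv
    set W₁ : Set (Fin d → ℝ) :=
      (fun x => B₁.transpose.mulVec x) '' setTranslate (intVec mv) E₁ with hW₁
    set W₂ : Set (Fin d → ℝ) :=
      (fun x => B₂.transpose.mulVec x) '' setTranslate (intVec mv) E₂ with hW₂
    set F₁ : (Fin d → ℝ) → ℂ := W₁.indicator (fun s => f' ((B₁.transpose)⁻¹.mulVec s))
      with hF₁
    set F₂ : (Fin d → ℝ) → ℂ := W₂.indicator (fun s => g' ((B₂.transpose)⁻¹.mulVec s))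
      with hF₂
    have hW₁m : MeasurableSet W₁ := by
      rw [hW₁, image_mulVec_eq_preimage B₁ hB₁]
      exact (measurableSet_setTranslate hE₁ _).preimage (measurable_mulVec _)
    have hW₂m : MeasurableSet W₂ := by
      rw [hW₂, image_mulVec_eq_preimage B₂ hB₂]
      exact (measurableSet_setTranslate hE₂ _).preimage (measurable_mulVec _)
    have hF₁m : StronglyMeasurable F₁ :=
      (hf'sm.comp_measurable (measurable_mulVec _)).indicator hW₁m
    have hF₂m : StronglyMeasurable F₂ :=
      (hg'sm.comp_measurable (measurable_mulVec _)).indicator hW₂m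
    have hF₁L : MemLp F₁ 2 (volume.restrict D) :=
      ((memLp_comp_mulVec (det_inv_transpose_ne_zero B₁ hB₁) hf'sm hf').indicator
        hW₁m).restrict D
    have hF₂L : MemLp F₂ 2 (volume.restrict D) :=
      ((memLp_comp_mulVec (det_inv_transpose_ne_zero B₂ hB₂) hg'sm hg').indicator
        hW₂m).restrict D
    have hprodD : (fun x => F₁ x * conj (F₂ x)) =ᵐ[volume.restrict D] 0 := by
      apply ae_restrict_of_ae
      have hae : ∀ᵐ s ∂(volume : Measure (Fin d → ℝ)), s ∉ W₁ ∩ W₂ := by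
        rw [ae_iff]
        simpa [not_not] using hWnull
      filter_upwards [hae] with s hs
      by_cases hs1 : s ∈ W₁
      · have hs2 : s ∉ W₂ := fun h => hs ⟨hs1, h⟩
        rw [hF₂, Set.indicator_of_notMem hs2]
        simp
      · rw [hF₁, Set.indicator_of_notMem hs1]
        simp
    have hpars := parseval_on_tile hDm hDt hF₁m hF₂m hF₁L hF₂L hprodD
    have hc1 : ∀ l : Fin d → ℤ, c₁ (mv, l)
        = ((Real.sqrt |B₁.det| * |B₁.det|⁻¹ : ℝ) : ℂ) *
          ∫ s in D, F₁ s * e2pi (intVec l ⬝ᵥ s) := by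
      intro l
      have e0 : c₁ (mv, l) = ∫ t, f' t * conj (gaborOp B₁ mv l
          (fun x => (Real.sqrt |B₁.det| : ℂ) * E₁.indicator 1 x) t) := by
        rw [hc₁]
        apply integral_congr_ae
        filter_upwards [hff'] with t ht
        rw [ht]
      rw [e0, coeff_eq B₁ hB₁ E₁ hE₁ f' hf'sm mv l D hDm
        (Set.Subset.trans Set.subset_union_left hDsub)]
    have hc2 : ∀ l : Fin d → ℤ, c₂ (mv, l)
        = ((Real.sqrt |B₂.det| * |B₂.det|⁻¹ : ℝ) : ℂ) *
          ∫ s in D, F₂ s * e2pi (intVec l ⬝ᵥ s) := by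
      intro l
      have e0 : c₂ (mv, l) = ∫ t, g' t * conj (gaborOp B₂ mv l
          (fun x => (Real.sqrt |B₂.det| : ℂ) * E₂.indicator 1 x) t) := by
        rw [hc₂]
        apply integral_congr_ae
        filter_upwards [hgg'] with t ht
        rw [ht]
      rw [e0, coeff_eq B₂ hB₂ E₂ hE₂ g' hg'sm mv l D hDm
        (Set.Subset.trans Set.subset_union_right hDsub)]
    calc ∑' l : Fin d → ℤ, c₁ (mv, l) * conj (c₂ (mv, l))
        = ∑' l : Fin d → ℤ, (((Real.sqrt |B₁.det| * |B₁.det|⁻¹ : ℝ) : ℂ) *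
            ((Real.sqrt |B₂.det| * |B₂.det|⁻¹ : ℝ) : ℂ)) *
            ((∫ s in D, F₁ s * e2pi (intVec l ⬝ᵥ s))
              * conj (∫ s in D, F₂ s * e2pi (intVec l ⬝ᵥ s))) := by
          refine tsum_congr fun l => ?_
          rw [hc1 l, hc2 l, _root_.map_mul, Complex.conj_ofReal]
          ring
      _ = (((Real.sqrt |B₁.det| * |B₁.det|⁻¹ : ℝ) : ℂ) *
            ((Real.sqrt |B₂.det| * |B₂.det|⁻¹ : ℝ) : ℂ)) *
            ∑' l : Fin d → ℤ, ((∫ s in D, F₁ s * e2pi (intVec l ⬝ᵥ s))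
              * conj (∫ s in D, F₂ s * e2pi (intVec l ⬝ᵥ s))) := tsum_mul_left
      _ = 0 := by rw [hpars, mul_zero]
  calc ∑' q : (Fin d → ℤ) × (Fin d → ℤ), c₁ q * conj (c₂ q)
      = ∑' (mv : Fin d → ℤ) (l : Fin d → ℤ), c₁ (mv, l) * conj (c₂ (mv, l)) :=
        hprodsum.tsum_prod' fun b => hprodsum.prod_factor b
    _ = ∑' _ : Fin d → ℤ, (0 : ℂ) := tsum_congr hinner
    _ = 0 := tsum_zero
end
end
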